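/- Let L be a frame. Then S_b(L), the poset of smooth sublocales (joins of locally closed sublocales) ordered by inclusion, is isomorphic to AU(LC(L)), the frame of admissible upper sets of the join-semilattice LC(L). In particular, S_b(L) together with the map (a,b) ↦ c(a) ∩ o(b) is the Bruns–Lakser completion of LC(L)^op. -/

import Mathlib

open Set

variable {L : Type*} [Order.Frame L]

/-- The open sublocale determined by `a`. -/
def Opn (a : L) : Set L := Set.range (a ⇨ ·)

/-- A sublocale: a subset closed under all meets and under `a ⇨ (-)`. -/
def IsSublocale (S : Set L) : Prop :=
  (∀ T ⊆ S, sInf T ∈ S) ∧ ∀ a : L, ∀ s ∈ S, a ⇨ s ∈ S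

/-- Join of two sublocales in the coframe of sublocales. -/
def SJoin2 (S T : Set L) : Set L := {x | ∃ M ⊆ S ∪ T, sInf M = x}

/-- The supplement (co-pseudocomplement) of a sublocale: the least sublocale `T`
with `S ∨ T = L`. -/
def Supp (S : Set L) : Set L := ⋂₀ {T | IsSublocale T ∧ SJoin2 S T = Set.univ}

/-- The frame surjection onto a sublocale. -/
def nu (T : Set L) (a : L) : L := sInf {t ∈ T | a ≤ t}

/-- Canonical representations of locally closed sublocales. -/
def LCset (L : Type*) [Order.Frame L] : Set (L × L) :=
  {p | p.1 ≤ p.2 ∧ p.2 ⇨ p.1 = p.1}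

/-- The canonical-representation map `lc`. -/
def lc (p : L × L) : L × L := (p.2 ⇨ p.1, (p.2 ⇨ p.1) ⊔ p.2)

/-- The order on `LCset L`: `(x,y) ⊑ (a,b)` iff `x ≤ a` and `b ≤ a ∨ y`. -/
def LCle (p q : L × L) : Prop := p.1 ≤ q.1 ∧ q.2 ≤ q.1 ⊔ p.2

/-- The join in `LCset L`. -/
def lcSup (p q : L × L) : L × L := lc (p.1 ⊔ q.1, p.2 ⊓ q.2)

/-- The join in the coframe of sublocales of a family of locally closed sublocales. -/
def SJoinP (U : Set (L × L)) : Set L :=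
  {x | ∃ M ⊆ ⋃ p ∈ U, Set.Ici p.1 ∩ Opn p.2, sInf M = x}

/-- `m` is the greatest lower bound of `F` in the poset `(LCset L, LCle)`. -/
def lcIsGLB (F : Set (L × L)) (m : L × L) : Prop :=
  m ∈ LCset L ∧ (∀ p ∈ F, LCle m p) ∧
    ∀ q ∈ LCset L, (∀ p ∈ F, LCle q p) → LCle q m

/-- `F` is an admissible family in the join-semilattice `LCset L`, with meet `m`:
the meet exists and distributes over binary joins. -/
def lcAdmissible (F : Set (L × L)) (m : L × L) : Prop :=
  lcIsGLB F m ∧ ∀ b ∈ LCset L, lcIsGLB ((fun p => lcSup b p) '' F) (lcSup b m)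

/-- Smooth sublocales: joins of locally closed sublocales. -/
def SmoothSub (T : Set L) : Prop := ∃ U : Set (L × L), T = SJoinP U

/-- Admissible upper sets of the join-semilattice `LCset L`. -/
def lcAUS (L : Type*) [Order.Frame L] (U : Set (L × L)) : Prop :=
  U.Nonempty ∧ U ⊆ LCset L ∧
    (∀ p ∈ U, ∀ q ∈ LCset L, LCle p q → q ∈ U) ∧
    ∀ F ⊆ U, ∀ m, lcAdmissible F m → m ∈ U

-- auxiliary development

def Sl (p : L × L) : Set L := Set.Ici p.1 ∩ Opn p.2

lemma mem_Opn {b t : L} : t ∈ Opn b ↔ b ⇨ t = t := by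
  constructor
  · rintro ⟨x, rfl⟩; simp [himp_himp]
  · intro h; exact ⟨t, h⟩

lemma mem_Sl {p : L × L} {t : L} : t ∈ Sl p ↔ p.1 ≤ t ∧ p.2 ⇨ t = t := by
  simp [Sl, mem_Opn, Set.mem_Ici]

lemma himp_iInf' {ι : Sort*} (a : L) (f : ι → L) : a ⇨ ⨅ i, f i = ⨅ i, a ⇨ f i :=
  le_antisymm (le_iInf fun i => himp_le_himp_left (iInf_le _ i))
    (le_himp_iff.2 (le_iInf fun i => le_himp_iff.1 (iInf_le _ i)))

lemma himp_sInf' (a : L) (M : Set L) : a ⇨ sInf M = ⨅ m : M, a ⇨ (m : L) := by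
  rw [sInf_eq_iInf', himp_iInf']

lemma Sl_sInf {p : L × L} {M : Set L} (h : M ⊆ Sl p) : sInf M ∈ Sl p := by
  rw [mem_Sl]
  constructor
  · exact le_sInf fun m hm => (mem_Sl.1 (h hm)).1
  · rw [himp_sInf', sInf_eq_iInf']
    exact iInf_congr fun m => (mem_Sl.1 (h m.2)).2

lemma Sl_himp {p : L × L} {x t : L} (h : t ∈ Sl p) : x ⇨ t ∈ Sl p := by
  rw [mem_Sl] at h ⊢
  refine ⟨h.1.trans le_himp, ?_⟩
  rw [himp_himp, inf_comm, ← himp_himp, h.2]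

lemma lc_mem (p : L × L) : lc p ∈ LCset L := by
  refine ⟨le_sup_left, ?_⟩
  show ((p.2 ⇨ p.1) ⊔ p.2) ⇨ (p.2 ⇨ p.1) = p.2 ⇨ p.1
  rw [sup_himp_distrib, himp_self, top_inf_eq, himp_himp, inf_idem]

lemma Sl_lc (p : L × L) : Sl (lc p) = Sl p := by
  obtain ⟨a, b⟩ := p
  ext t
  simp only [mem_Sl, lc, sup_himp_distrib]
  constructor
  · rintro ⟨h1, h2⟩
    have hba : b ⇨ t ≤ t := by
      have : b ⇨ t ≤ (b ⇨ a) ⇨ t := by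
        rw [le_himp_iff, ← himp_inf_distrib]
        exact (himp_le_himp_left inf_le_right).trans h1
      calc b ⇨ t ≤ ((b ⇨ a) ⇨ t) ⊓ (b ⇨ t) := le_inf this le_rfl
        _ = t := h2
    exact ⟨(le_himp.trans h1), le_antisymm hba le_himp⟩
  · rintro ⟨h1, h2⟩
    refine ⟨?_, ?_⟩
    · calc b ⇨ a ≤ b ⇨ t := himp_le_himp_left h1
        _ = t := h2
    · rw [h2, inf_eq_right.2 le_himp]

lemma Sl_pair_inter (a₁ a₂ b₁ b₂ : L) :
    Sl ((a₁ ⊔ a₂, b₁ ⊓ b₂) : L × L) = Sl (a₁, b₁) ∩ Sl (a₂, b₂) := by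
  ext t
  simp only [Set.mem_inter_iff, mem_Sl, sup_le_iff]
  constructor
  · rintro ⟨⟨h1, h2⟩, h3⟩
    rw [← himp_himp] at h3
    have hb1 : b₁ ⇨ t ≤ t := by
      calc b₁ ⇨ t ≤ b₁ ⇨ (b₂ ⇨ t) := himp_le_himp_left le_himp
        _ = t := h3
    have hb1' : b₁ ⇨ t = t := le_antisymm hb1 le_himp
    have hb2 : b₂ ⇨ t ≤ t := by
      calc b₂ ⇨ t ≤ b₁ ⇨ (b₂ ⇨ t) := le_himp
        _ = t := h3
    exact ⟨⟨h1, hb1'⟩, h2, le_antisymm hb2 le_himp⟩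
  · rintro ⟨⟨h1, hb1⟩, h2, hb2⟩
    refine ⟨⟨h1, h2⟩, ?_⟩
    rw [← himp_himp, hb2, hb1]

lemma Sl_lcSup (p q : L × L) : Sl (lcSup p q) = Sl p ∩ Sl q := by
  rw [lcSup, Sl_lc]
  have := Sl_pair_inter p.1 q.1 p.2 q.2
  simpa using this

lemma LCle_of_subset {p q : L × L} (hq : q.2 ⇨ q.1 = q.1) (h : Sl q ⊆ Sl p) :
    LCle p q := by
  have hq1 : q.1 ∈ Sl q := mem_Sl.2 ⟨le_rfl, hq⟩
  have h1 : p.1 ≤ q.1 := (mem_Sl.1 (h hq1)).1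
  have ht : q.2 ⇨ (q.1 ⊔ p.2) ∈ Sl q := by
    rw [mem_Sl]
    exact ⟨le_sup_left.trans le_himp, by rw [himp_himp, inf_idem]⟩
  have ht' := mem_Sl.1 (h ht)
  have hp2 : p.2 ≤ q.2 ⇨ (q.1 ⊔ p.2) := le_sup_right.trans le_himp
  have : q.2 ⇨ (q.1 ⊔ p.2) = ⊤ := by
    rw [← ht'.2, himp_eq_top_iff.2 hp2]
  exact ⟨h1, himp_eq_top_iff.1 this⟩

lemma subset_of_LCle {p q : L × L} (h : LCle p q) : Sl q ⊆ Sl p := by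
  intro t ht
  rw [mem_Sl] at ht ⊢
  refine ⟨h.1.trans ht.1, le_antisymm ?_ le_himp⟩
  calc p.2 ⇨ t = ⊤ ⊓ (p.2 ⇨ t) := (top_inf_eq _).symm
    _ = (q.1 ⇨ t) ⊓ (p.2 ⇨ t) := by rw [himp_eq_top_iff.2 ht.1]
    _ = (q.1 ⊔ p.2) ⇨ t := (sup_himp_distrib _ _ _).symm
    _ ≤ q.2 ⇨ t := himp_le_himp_right h.2
    _ = t := ht.2

lemma sInf_mem_SJoinP {U : Set (L × L)} {M : Set L} (h : M ⊆ SJoinP U) :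
    sInf M ∈ SJoinP U := by
  classical
  choose f hf1 hf2 using fun (m : M) => h m.2
  refine ⟨⋃ m : M, f m, Set.iUnion_subset fun m => hf1 m, ?_⟩
  have : sInf (⋃ m : M, f m) = ⨅ m : M, sInf (f m) := by
    apply le_antisymm
    · exact le_iInf fun m => sInf_le_sInf (Set.subset_iUnion f m)
    · refine le_sInf fun x hx => ?_
      obtain ⟨m, hm⟩ := Set.mem_iUnion.1 hx
      exact (iInf_le _ m).trans (sInf_le hm)
  rw [this, sInf_eq_iInf']
  exact iInf_congr fun m => hf2 m

lemma Sl_subset_SJoinP {U : Set (L × L)} {q : L × L} (hq : q ∈ U) :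
    Sl q ⊆ SJoinP U := by
  intro t ht
  refine ⟨{t}, ?_, sInf_singleton⟩
  rw [Set.singleton_subset_iff]
  exact Set.mem_iUnion₂.2 ⟨q, hq, ht⟩

lemma SJoinP_mono {U V : Set (L × L)} (h : U ⊆ V) : SJoinP U ⊆ SJoinP V := by
  rintro t ⟨M, hM, rfl⟩
  exact ⟨M, hM.trans (Set.biUnion_subset_biUnion_left h), rfl⟩

lemma top_mem_SJoinP (U : Set (L × L)) : ⊤ ∈ SJoinP U :=
  ⟨∅, Set.empty_subset _, sInf_empty⟩

lemma SJoinP_subset {U : Set (L × L)} {T : Set L}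
    (hT : ∀ M ⊆ T, sInf M ∈ T) (h : ∀ q ∈ U, Sl q ⊆ T) : SJoinP U ⊆ T := by
  rintro t ⟨M, hM, rfl⟩
  refine hT M fun m hm => ?_
  obtain ⟨q, hq, hmq⟩ := Set.mem_iUnion₂.1 (hM hm)
  exact h q hq hmq

lemma main_decomp {a b : L} (hba : b ⇨ a = a) {U : Set (L × L)} {t : L}
    (ht : t ∈ Sl ((a, b) : L × L)) (htU : t ∈ SJoinP U) :
    ∃ M ⊆ ⋃ q ∈ U, Sl ((a, b) : L × L) ∩ Sl q, sInf M = t := by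
  classical
  obtain ⟨M₀, hM₀, rfl⟩ := htU
  rw [mem_Sl] at ht
  obtain ⟨hat, hbt⟩ := ht
  set uFun : L → L := fun m =>
    if h : ∃ q, q ∈ U ∧ m ∈ Sl q then
      b ⇨ sInf {s | s ∈ Sl h.choose ∧ a ⊔ m ≤ s} else ⊤ with huFun
  have spec : ∀ m ∈ M₀, m ≤ uFun m ∧ uFun m ⊓ ((a ⇨ m) ⊓ (b ⊔ m)) = m ∧
      b ⇨ uFun m = uFun m ∧ uFun m ∈ ⋃ q ∈ U, Sl ((a, b) : L × L) ∩ Sl q := by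
    intro m hm
    have h : ∃ q, q ∈ U ∧ m ∈ Sl q := by
      obtain ⟨q, hq, hmq⟩ := Set.mem_iUnion₂.1 (hM₀ hm)
      exact ⟨q, hq, hmq⟩
    obtain ⟨hq₀, hmq₀⟩ := h.choose_spec
    set q₀ := h.choose
    set ν := sInf {s | s ∈ Sl q₀ ∧ a ⊔ m ≤ s} with hν
    have hu : uFun m = b ⇨ ν := by rw [huFun]; simp only [dif_pos h]; rfl
    have hν_mem : ν ∈ Sl q₀ := Sl_sInf fun s hs => hs.1
    have hν_ge : a ⊔ m ≤ ν := le_sInf fun s hs => hs.2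
    have hmν : m ≤ ν := le_sup_right.trans hν_ge
    have hmu : m ≤ uFun m := hu ▸ hmν.trans le_himp
    have hbu : b ⇨ uFun m = uFun m := by rw [hu, himp_himp, inf_idem]
    have huab : uFun m ∈ Sl ((a, b) : L × L) := by
      rw [mem_Sl, hu]
      exact ⟨hba ▸ himp_le_himp_left (le_sup_left.trans hν_ge), by rw [himp_himp, inf_idem]⟩
    have huq : uFun m ∈ Sl q₀ := hu ▸ Sl_himp hν_mem
    refine ⟨hmu, ?_, hbu, Set.mem_iUnion₂.2 ⟨q₀, hq₀, huab, huq⟩⟩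
    apply le_antisymm
    · have hub : uFun m ⊓ (b ⊔ m) ≤ ν := by
        rw [inf_sup_left]
        exact sup_le (hu ▸ himp_inf_le) (inf_le_right.trans hmν)
    -- ν ≤ (a ⇨ m) ⇨ m
      have hν2 : ν ≤ (a ⇨ m) ⇨ m := by
        refine sInf_le ⟨Sl_himp hmq₀, sup_le ?_ le_himp⟩
        rw [le_himp_iff, inf_comm]
        exact himp_inf_le
      have step : uFun m ⊓ ((a ⇨ m) ⊓ (b ⊔ m)) ≤ ν ⊓ (a ⇨ m) :=
        le_inf (le_trans (le_inf inf_le_left (inf_le_right.trans inf_le_right)) hub)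
          (inf_le_right.trans inf_le_left)
      exact step.trans (le_himp_iff.1 hν2)
    · exact le_inf hmu (le_inf le_himp le_sup_right)
  refine ⟨uFun '' M₀, ?_, ?_⟩
  · rintro x ⟨m, hm, rfl⟩
    exact (spec m hm).2.2.2
  · have himg : sInf (uFun '' M₀) = ⨅ m : M₀, uFun m := by
      apply le_antisymm
      · exact le_iInf fun m => sInf_le ⟨m, m.2, rfl⟩
      · refine le_sInf ?_
        rintro x ⟨m, hm, rfl⟩
        exact iInf_le (fun m : M₀ => uFun (m : L)) ⟨m, hm⟩
    have key : sInf M₀ = (⨅ m : M₀, uFun m) ⊓ ⨅ m : M₀, (a ⇨ (m : L)) ⊓ (b ⊔ m) := by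
      rw [← iInf_inf_eq, sInf_eq_iInf']
      exact iInf_congr fun m => ((spec m m.2).2.1).symm
    have hA : (⨅ m : M₀, (a ⇨ (m : L)) ⊓ (b ⊔ (m : L))) =
        (⨅ m : M₀, a ⇨ (m : L)) ⊓ ⨅ m : M₀, b ⊔ (m : L) := iInf_inf_eq
    have hAtop : (⨅ m : M₀, a ⇨ (m : L)) = ⊤ := by
      refine iInf_eq_top.2 fun m => himp_eq_top_iff.2 (hat.trans (sInf_le m.2))
    have key2 : sInf M₀ = (⨅ m : M₀, uFun m) ⊓ ⨅ m : M₀, b ⊔ (m : L) := by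
      rw [key, hA, hAtop, top_inf_eq]
    have hb1 : b ⇨ (⨅ m : M₀, uFun (m : L)) = ⨅ m : M₀, uFun (m : L) := by
      rw [himp_iInf']
      exact iInf_congr fun m => (spec m m.2).2.2.1
    have hb2 : b ⇨ (⨅ m : M₀, b ⊔ (m : L)) = ⊤ := by
      rw [himp_iInf']
      exact iInf_eq_top.2 fun m => himp_eq_top_iff.2 le_sup_left
    rw [himg]
    calc (⨅ m : M₀, uFun (m : L))
        = (b ⇨ ⨅ m : M₀, uFun (m : L)) ⊓ (b ⇨ ⨅ m : M₀, b ⊔ (m : L)) := by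
          rw [hb1, hb2, inf_top_eq]
      _ = b ⇨ sInf M₀ := by rw [← himp_inf_distrib, ← key2]
      _ = sInf M₀ := hbt

lemma Sl_adm_subset {F : Set (L × L)} {m : L × L} (hadm : lcAdmissible F m) :
    Sl m ⊆ SJoinP F := by
  intro t ht
  have htop : ((t, ⊤) : L × L) ∈ LCset L := ⟨le_top, top_himp (a := t)⟩
  have hglb := hadm.2 (t, ⊤) htop
  set s := sInf {j ∈ SJoinP F | t ≤ j} with hs
  have hsJ : s ∈ SJoinP F := sInf_mem_SJoinP fun j hj => hj.1
  have hts : t ≤ s := le_sInf fun j hj => hj.2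
  have hstLC : ((s, ⊤) : L × L) ∈ LCset L := ⟨le_top, top_himp (a := s)⟩
  have hlow : ∀ p ∈ (fun p => lcSup ((t, ⊤) : L × L) p) '' F, LCle ((s, ⊤) : L × L) p := by
    rintro _ ⟨q, hq, rfl⟩
    refine LCle_of_subset (lc_mem _).2 ?_
    rw [Sl_lcSup]
    intro x hx
    rw [mem_Sl]
    exact ⟨sInf_le ⟨Sl_subset_SJoinP hq hx.2, (mem_Sl.1 hx.1).1⟩, top_himp (a := x)⟩
  have hle := hglb.2.2 ((s, ⊤) : L × L) hstLC hlow
  have hsub := subset_of_LCle hle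
  rw [Sl_lcSup] at hsub
  have hmem : t ∈ Sl ((t, ⊤) : L × L) ∩ Sl m := ⟨mem_Sl.2 ⟨le_rfl, top_himp (a := t)⟩, ht⟩
  have hst : s ≤ t := (mem_Sl.1 (hsub hmem)).1
  have : t = s := le_antisymm hts hst
  rwa [this]

lemma lcAUS_eSet {T : Set L} (hT : SmoothSub T) :
    lcAUS L {p | p ∈ LCset L ∧ Sl p ⊆ T} := by
  obtain ⟨V, rfl⟩ := hT
  refine ⟨⟨((⊤, ⊤) : L × L), ⟨le_rfl, top_himp (a := (⊤:L))⟩, ?_⟩, fun p hp => hp.1, ?_, ?_⟩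
  · intro x hx
    have hx1 : (⊤ : L) ≤ x := (mem_Sl.1 hx).1
    have : x = ⊤ := le_antisymm le_top hx1
    rw [this]
    exact top_mem_SJoinP V
  · exact fun p hp q hq hle => ⟨hq, (subset_of_LCle hle).trans hp.2⟩
  · intro F hF m hadm
    refine ⟨hadm.1.1, (Sl_adm_subset hadm).trans ?_⟩
    exact SJoinP_subset (fun M hM => sInf_mem_SJoinP hM) fun q hq => (hF hq).2

lemma mem_of_Sl_subset {U : Set (L × L)} (hU : lcAUS L U) {p : L × L}
    (hp : p ∈ LCset L) (hsub : Sl p ⊆ SJoinP U) : p ∈ U := by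
  set F := {q | q ∈ U ∧ LCle p q} with hF
  have hFU : F ⊆ U := fun q hq => hq.1
  have hSlF : Sl p = SJoinP F := by
    apply Set.Subset.antisymm
    · intro t ht
      obtain ⟨M, hM, rfl⟩ := main_decomp hp.2 ht (hsub ht)
      refine ⟨M, hM.trans ?_, rfl⟩
      intro x hx
      obtain ⟨q, hq, hx1, hx2⟩ := Set.mem_iUnion₂.1 hx
      refine Set.mem_iUnion₂.2 ⟨lcSup p q, ⟨?_, ?_⟩, ?_⟩
      · refine hU.2.2.1 q hq _ (lc_mem _) (LCle_of_subset (lc_mem _).2 ?_)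
        rw [Sl_lcSup]; exact Set.inter_subset_right
      · refine LCle_of_subset (lc_mem _).2 ?_
        rw [Sl_lcSup]; exact Set.inter_subset_left
      · rw [show (Set.Ici (lcSup p q).1 ∩ Opn (lcSup p q).2 : Set L) = Sl (lcSup p q) from rfl,
          Sl_lcSup]
        exact ⟨hx1, hx2⟩
    · exact SJoinP_subset (fun M hM => Sl_sInf hM) fun q hq => subset_of_LCle hq.2
  have hGLB : lcIsGLB F p := by
    refine ⟨hp, fun q hq => hq.2, fun r hr hlow => LCle_of_subset hp.2 ?_⟩
    rw [hSlF]
    exact SJoinP_subset (fun M hM => Sl_sInf hM) fun q hq => subset_of_LCle (hlow q hq)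
  have hadm : lcAdmissible F p := by
    refine ⟨hGLB, fun b hb => ⟨lc_mem _, ?_, ?_⟩⟩
    · rintro _ ⟨q, hq, rfl⟩
      refine LCle_of_subset (lc_mem _).2 ?_
      rw [Sl_lcSup, Sl_lcSup]
      exact Set.inter_subset_inter_right _ (subset_of_LCle hq.2)
    · intro r hr hlow
      refine LCle_of_subset (lc_mem _).2 ?_
      rw [Sl_lcSup]
      intro x hx
      have hxF : x ∈ SJoinP F := hSlF ▸ hx.2
      obtain ⟨M, hM, rfl⟩ := main_decomp hb.2 hx.1 hxF
      apply Sl_sInf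
      refine hM.trans ?_
      intro y hy
      obtain ⟨q, hq, hy1, hy2⟩ := Set.mem_iUnion₂.1 hy
      have hsub2 := subset_of_LCle (hlow _ ⟨q, hq, rfl⟩)
      rw [Sl_lcSup] at hsub2
      exact hsub2 ⟨hy1, hy2⟩
  exact hU.2.2.2 F hFU p hadm

lemma SJoinP_eSet {T : Set L} (hT : SmoothSub T) :
    SJoinP {p | p ∈ LCset L ∧ Sl p ⊆ T} = T := by
  obtain ⟨V, rfl⟩ := hT
  apply Set.Subset.antisymm
  · exact SJoinP_subset (fun M hM => sInf_mem_SJoinP hM) fun q hq => hq.2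
  · rintro t ⟨M, hM, rfl⟩
    refine ⟨M, hM.trans ?_, rfl⟩
    intro x hx
    obtain ⟨q, hq, hxq⟩ := Set.mem_iUnion₂.1 hx
    refine Set.mem_iUnion₂.2 ⟨lc q, ⟨lc_mem q, (Sl_lc q) ▸ Sl_subset_SJoinP hq⟩, ?_⟩
    show x ∈ Sl (lc q)
    rw [Sl_lc q]
    exact hxq

theorem stmt_15 :
    ∃ e : {T : Set L // SmoothSub T} ≃o {U : Set (L × L) // lcAUS L U},
      ∀ T : {T : Set L // SmoothSub T},
        (e T : Set (L × L)) =
          {p | p ∈ LCset L ∧ Set.Ici p.1 ∩ Opn p.2 ⊆ (T : Set L)} := by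
  refine ⟨⟨⟨fun T => ⟨{p | p ∈ LCset L ∧ Set.Ici p.1 ∩ Opn p.2 ⊆ (T : Set L)},
      lcAUS_eSet T.2⟩,
      fun U => ⟨SJoinP U.1, U.1, rfl⟩, ?_, ?_⟩, ?_⟩, fun T => rfl⟩
  · intro T
    exact Subtype.ext (SJoinP_eSet T.2)
  · intro U
    refine Subtype.ext (Set.Subset.antisymm ?_ ?_)
    · exact fun p hp => mem_of_Sl_subset U.2 hp.1 hp.2
    · exact fun q hq => ⟨U.2.2.1 hq, Sl_subset_SJoinP hq⟩
  · intro T T'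
    constructor
    · intro h
      have h1 : SJoinP {p | p ∈ LCset L ∧ Sl p ⊆ (T : Set L)} ⊆
          SJoinP {p | p ∈ LCset L ∧ Sl p ⊆ (T' : Set L)} := SJoinP_mono h
      rw [SJoinP_eSet T.2, SJoinP_eSet T'.2] at h1
      exact h1
    · intro h p hp
      exact ⟨hp.1, hp.2.trans h⟩
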